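/- For every standard Young-Fibonacci tableau t of size n, the word min(t), obtained by reading the columns of t from right to left and each column from top to bottom, is a permutation of {1,…,n} with P(min(t)) = t, and it is the lexicographically least permutation whose Young-Fibonacci insertion tableau is t. -/

import Mathlib

/-- A snakeshape: a composition all of whose parts equal 1 or 2, recorded as the
list of column heights, read left to right. -/
def IsSnakeshape (u : List ℕ) : Prop := ∀ p ∈ u, p = 1 ∨ p = 2

/-- The shape (list of column heights, left to right) of a tableau given as a
list of columns, each column listed top to bottom. -/
def shapeOf (t : List (List ℕ)) : List ℕ := t.map List.length

/-- `t` is a standard Young–Fibonacci tableau of size `n`: columns are listed left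
to right, each column top to bottom; every column has height 1 or 2; in each
column the top entry exceeds the bottom entry; every topmost entry exceeds all
entries in columns strictly to its right; and the entries are exactly `1,…,n`. -/
def IsYFT (n : ℕ) (t : List (List ℕ)) : Prop :=
  (∀ c ∈ t, c.length = 1 ∨ c.length = 2) ∧
  (∀ c ∈ t, List.Chain' (fun a b => b < a) c) ∧
  (∀ i j : ℕ, i < j → j < t.length →
    ∀ a ∈ (t.getD i []).head?, ∀ x ∈ t.getD j [], x < a) ∧
  (t.flatten).Perm (List.range' 1 n)

/-- Auxiliary, fuelled version of the Young–Fibonacci insertion: reading the word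
from right to left, each letter read gets matched to the largest not-yet-matched
letter occurring strictly to its left which exceeds it (forming a height-2 column,
larger letter on top), and otherwise stays single (a height-1 column); columns are
listed in the order in which their status was settled. -/
def insertColsAux : ℕ → List ℕ → List (List ℕ)
  | 0, _ => []
  | _, [] => []
  | fuel+1, w =>
    let x := w.getLast!
    let w' := w.dropLast
    match (w'.filter (fun y => decide (x < y))).max? with
    | none => [x] :: insertColsAux fuel w'
    | some m => [m, x] :: insertColsAux fuel (w'.erase m)

/-- The Young–Fibonacci insertion tableau of a word. -/
def insertCols (w : List ℕ) : List (List ℕ) := insertColsAux w.length w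

/-- The word `σ(1)⋯σ(n)` of a permutation of `{1,…,n}` (letters `1,…,n`). -/
def permWord {n : ℕ} (σ : Equiv.Perm (Fin n)) : List ℕ :=
  List.ofFn (fun i => (σ i : ℕ) + 1)

/-- min(t): read the columns right to left, each column top to bottom. -/
def minWord (t : List (List ℕ)) : List ℕ := t.reverse.flatten

/-- max(t): the top row left to right, then the bottom row right to left. -/
def maxWord (t : List (List ℕ)) : List ℕ :=
  (t.filterMap fun c => if c.length = 2 then c.head? else none) ++
    (t.filterMap List.getLast?).reverse

/-- Number of inversions of a word: pairs of positions `p < q` with `w p > w q`. -/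
def invCount (w : List ℕ) : ℕ :=
  ((Finset.range w.length ×ˢ Finset.range w.length).filter
    (fun p => p.1 < p.2 ∧ w.getD p.2 0 < w.getD p.1 0)).card

/-- `w'` is obtained from `w` by swapping two adjacent letters `x < y` (in this
order in `w`), thus creating exactly one more inversion. -/
def AdjSwap (w w' : List ℕ) : Prop :=
  ∃ l r : List ℕ, ∃ x y : ℕ, x < y ∧ w = l ++ x :: y :: r ∧ w' = l ++ y :: x :: r

/-- The (right) weak order on words. -/
def WordWeakLe (w w' : List ℕ) : Prop := Relation.ReflTransGen AdjSwap w w'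

/-- `Shift t t'`: `t'` is obtained from `t` by shifting one entry. Columns are
listed top to bottom, so `[b, a]` is the column with top `b`, bottom `a`. -/
inductive Shift : List (List ℕ) → List (List ℕ) → Prop
  /-- the bottom entry `a` of a height-2 column bumps up the single entry `c` of
  the column on its left; the top entry `b` falls down. -/
  | bump2 (l r : List (List ℕ)) (c b a : ℕ) :
      Shift (l ++ [[c], [b, a]] ++ r) (l ++ [[c, a], [b]] ++ r)
  /-- the entry `a` of a height-1 column bumps up the single entry `c` of the
  column on its left; its own column disappears. -/
  | bump1 (l r : List (List ℕ)) (c a : ℕ) :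
      Shift (l ++ [[c], [a]] ++ r) (l ++ [[c, a]] ++ r)
  /-- `a < c` replaces `c` at the bottom of the height-2 column on its left, and
  `c < b` takes the former place of `a`. -/
  | exch (l r : List (List ℕ)) (d c b a : ℕ) (h1 : a < c) (h2 : c < b) :
      Shift (l ++ [[d, c], [b, a]] ++ r) (l ++ [[d, a], [b, c]] ++ r)
  /-- `a < c` replaces `c` at the bottom of the height-2 column on its left; since
  `b < c`, `c` becomes a new height-1 column in between and `b` falls down. -/
  | split2 (l r : List (List ℕ)) (d c b a : ℕ) (h1 : a < c) (h2 : b < c) :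
      Shift (l ++ [[d, c], [b, a]] ++ r) (l ++ [[d, a], [c], [b]] ++ r)
  /-- `a < c` replaces `c` at the bottom of the height-2 column on its left; `c`
  becomes a new height-1 column and the height-1 column of `a` disappears. -/
  | split1 (l r : List (List ℕ)) (d c a : ℕ) (h1 : a < c) :
      Shift (l ++ [[d, c], [a]] ++ r) (l ++ [[d, a], [c]] ++ r)

/-- The bottom row of a tableau, read left to right: the bottom entries of the
height-2 columns together with the entries of the height-1 columns. -/
def bottomRow (t : List (List ℕ)) : List ℕ := t.filterMap List.getLast?

/-- Generating relations of the canonical poset `P_t`: `canoGen t x y` means `x`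
is covered... i.e. `x <_P y` is a generating relation: consecutive bottom-row
entries read right to left (rightmost lowest), and each top entry of a height-2
column below the corresponding bottom entry. -/
def canoGen (t : List (List ℕ)) (x y : ℕ) : Prop :=
  (∃ i : ℕ, i + 1 < (bottomRow t).length ∧
    (bottomRow t).getD (i + 1) 0 = x ∧ (bottomRow t).getD i 0 = y) ∨
  (∃ c ∈ t, c.length = 2 ∧ c.head? = some x ∧ c.getLast? = some y)

/-- `w` is (the word of) a linear extension of the canonical poset `P_t`. -/
def IsLinExt (t : List (List ℕ)) (w : List ℕ) : Prop :=
  ∀ x y : ℕ, Relation.ReflTransGen (canoGen t) x y → x ≠ y →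
    w.idxOf x < w.idxOf y

/-- The set of inversions of a word: pairs `(j, i)` with `i < j` such that `j`
occurs before `i`. -/
def InvSet (w : List ℕ) : Set (ℕ × ℕ) :=
  {p | p.2 < p.1 ∧ p.1 ∈ w ∧ p.2 ∈ w ∧ w.idxOf p.1 < w.idxOf p.2}

/-- The set of non-inversions of a word: pairs `(i, j)` with `i < j` such that `i`
occurs before `j`. -/
def NonInvSet (w : List ℕ) : Set (ℕ × ℕ) :=
  {p | p.1 < p.2 ∧ p.1 ∈ w ∧ p.2 ∈ w ∧ w.idxOf p.1 < w.idxOf p.2}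

/-- The row canonical tableau of shape `u` (size `n`): topmost cells are labelled
`n, n-1, …` from left to right, bottom cells of height-2 columns are labelled
`1, 2, …` from left to right. -/
def rTcols (n : ℕ) (u : List ℕ) : List (List ℕ) :=
  (List.range u.length).map (fun i =>
    if u.getD i 0 = 2 then [n - i, (u.take i).count 2 + 1] else [n - i])

/-- The column canonical tableau of shape `u`: cells are labelled `1, 2, …` taking
columns right to left, in each column the bottom cell before the top cell. -/
def cTcols (u : List ℕ) : List (List ℕ) :=
  (List.range u.length).map (fun i =>
    let s := u.sum - (u.take (i + 1)).sum
    if u.getD i 0 = 2 then [s + 2, s + 1] else [s + 1])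

/-- `t` is a semistandard Young–Fibonacci tableau of shape `u`: entries are
positive integers, in each column the top entry strictly exceeds the bottom one,
and every topmost entry is `≥` all entries in columns strictly to its right. -/
def IsSSYFT (u : List ℕ) (t : List (List ℕ)) : Prop :=
  shapeOf t = u ∧
  (∀ c ∈ t, List.Chain' (fun a b => b < a) c) ∧
  (∀ i j : ℕ, i < j → j < t.length →
    ∀ a ∈ (t.getD i []).head?, ∀ x ∈ t.getD j [], x ≤ a) ∧
  (∀ x ∈ t.flatten, 1 ≤ x)

/-- `t` has content `v`: for each `i`, `t` has exactly `v_i` entries equal to `i`.-/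
def ContentIs (v : List ℕ) (t : List (List ℕ)) : Prop :=
  ∀ i : ℕ, t.flatten.count (i + 1) = v.getD i 0

/-- The Young–Fibonacci number `N_{u,v}`: the number of semistandard
Young–Fibonacci tableaux of shape `u` and content `v`. -/
noncomputable def YFNumber (u v : List ℕ) : ℕ :=
  Nat.card {t : List (List ℕ) // IsSSYFT u t ∧ ContentIs v t}

/-- The multiset (as a list indexed by positions) `v^{1-}`: delete a part equal
to 1, or decrease a larger part by 1. -/
def vMinus (v : List ℕ) : List (List ℕ) :=
  (List.range v.length).map (fun p =>
    if v.getD p 0 = 1 then v.eraseIdx p else v.set p (v.getD p 0 - 1))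

/-- The list of snakeshapes covering `u` in the Young–Fibonacci lattice:
(i) prepend a part 1; (ii) replace the leftmost part equal to 1 by a 2;
(iii) if `u` starts with `k ≥ 1` parts equal to 2, insert a part 1 just after the
`i`-th part, `1 ≤ i ≤ k`. -/
def coversList (u : List ℕ) : List (List ℕ) :=
  [1 :: u] ++
    (if (u.takeWhile (fun p => decide (p = 2))).length < u.length then
      [u.take (u.takeWhile (fun p => decide (p = 2))).length ++
        2 :: u.drop ((u.takeWhile (fun p => decide (p = 2))).length + 1)]
    else []) ++
    ((List.range (u.takeWhile (fun p => decide (p = 2))).length).map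
      (fun i => u.insertIdx (i + 1) 1))

/-- Okada's analogue of the Kostka numbers (fuelled implementation of the
defining recurrences; `v.length` is enough fuel). -/
def OkadaKAux : ℕ → List ℕ → List ℕ → ℕ
  | _, [], [] => 1
  | fuel+1, 1 :: u, 1 :: v => OkadaKAux fuel u v
  | fuel+1, 2 :: u, 2 :: v => OkadaKAux fuel u v
  | _+1, 1 :: _, 2 :: _ => 0
  | fuel+1, 2 :: u, 1 :: v => ((coversList u).map (fun w => OkadaKAux fuel w v)).sum
  | _, _, _ => 0

/-- Okada's analogue `K_{u,v}` of the Kostka numbers, determined by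
`K_{∅,∅} = 1`, `K_{1u,1v} = K_{u,v}`, `K_{2u,2v} = K_{u,v}`, `K_{1u,2v} = 0` and
`K_{2u,1v} = Σ_{w covers u} K_{w,v}`. -/
def OkadaK (u v : List ℕ) : ℕ := OkadaKAux v.length u v

/-- The cells of a snakeshape `u`: pairs `(i, r)` with `i` the (0-based) column
index and `r = 0` for the bottom cell, `r = 1` for the top cell. -/
def cellsFinset (u : List ℕ) : Finset (ℕ × ℕ) :=
  (Finset.range u.length ×ˢ Finset.range 2).filter (fun p => p.2 < u.getD p.1 0)

/-- Generating relations of the poset `P_u` on the cells of `u`: the bottom-row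
cells read right to left form a chain (rightmost lowest), and the top cell of
each height-2 column lies strictly below its bottom cell. -/
def cellGen (u : List ℕ) (c c' : ℕ × ℕ) : Prop :=
  (∃ i : ℕ, i + 1 < u.length ∧ c = (i + 1, 0) ∧ c' = (i, 0)) ∨
  (∃ i : ℕ, i < u.length ∧ u.getD i 0 = 2 ∧ c = (i, 1) ∧ c' = (i, 0))

/-- The order relation of the poset `P_u`. -/
def cellLe (u : List ℕ) (c c' : ℕ × ℕ) : Prop :=
  Relation.ReflTransGen (cellGen u) c c'

section YFAux

lemma getLast!_concat' (l : List ℕ) (x : ℕ) : (l ++ [x]).getLast! = x :=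
  List.getLast!_of_getLast? List.getLast?_concat

lemma insertColsAux_nil (f : ℕ) : insertColsAux f [] = [] := by cases f <;> rfl

lemma insertColsAux_succ (f : ℕ) (w : List ℕ) (hw : w ≠ []) :
    insertColsAux (f+1) w =
      (match (w.dropLast.filter (fun y => decide (w.getLast! < y))).max? with
      | none => [w.getLast!] :: insertColsAux f w.dropLast
      | some m => [m, w.getLast!] :: insertColsAux f (w.dropLast.erase m)) := by
  obtain ⟨y, ys, rfl⟩ := List.exists_cons_of_ne_nil hw
  rfl

lemma insertColsAux_concat (f : ℕ) (l : List ℕ) (x : ℕ) :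
    insertColsAux (f+1) (l ++ [x]) =
      (match (l.filter (fun y => decide (x < y))).max? with
      | none => [x] :: insertColsAux f l
      | some m => [m, x] :: insertColsAux f (l.erase m)) := by
  rw [insertColsAux_succ f _ (by simp)]
  simp only [getLast!_concat', List.dropLast_concat]

lemma exists_concat_of_ne_nil {w : List ℕ} (hw : w ≠ []) : ∃ l x, w = l ++ [x] :=
  ⟨w.dropLast, w.getLast hw, (List.dropLast_append_getLast hw).symm⟩

lemma aux_congr : ∀ f g (w : List ℕ), w.length ≤ f → w.length ≤ g →
    insertColsAux f w = insertColsAux g w := by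
  intro f
  induction f with
  | zero =>
    intro g w hf _
    rw [List.length_eq_zero_iff.mp (Nat.le_zero.mp hf), insertColsAux_nil, insertColsAux_nil]
  | succ f ih =>
    intro g w hf hg
    rcases eq_or_ne w [] with rfl | hw
    · rw [insertColsAux_nil, insertColsAux_nil]
    obtain ⟨l, x, rfl⟩ := exists_concat_of_ne_nil hw
    have hlen : l.length + 1 = (l ++ [x]).length := by simp
    obtain ⟨g', rfl⟩ : ∃ g', g = g' + 1 := ⟨g - 1, by omega⟩
    have hlf : l.length ≤ f := by omega
    have hlg : l.length ≤ g' := by omega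
    rw [insertColsAux_concat, insertColsAux_concat]
    cases h : (l.filter (fun y => decide (x < y))).max? with
    | none => simp only [ih g' l hlf hlg]
    | some m =>
      simp only [ih g' (l.erase m) (le_trans List.length_erase_le hlf)
        (le_trans List.length_erase_le hlg)]

lemma insertCols_eq_aux (f : ℕ) (w : List ℕ) (h : w.length ≤ f) :
    insertColsAux f w = insertCols w :=
  aux_congr f w.length w h le_rfl

lemma insertCols_concat (l : List ℕ) (x : ℕ) :
    insertCols (l ++ [x]) =
      (match (l.filter (fun y => decide (x < y))).max? with
      | none => [x] :: insertCols l
      | some m => [m, x] :: insertCols (l.erase m)) := by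
  have : insertCols (l ++ [x]) = insertColsAux (l.length + 1) (l ++ [x]) := by
    rw [insertCols]; congr 1; simp
  rw [this, insertColsAux_concat]
  cases h : (l.filter (fun y => decide (x < y))).max? with
  | none => simp only [insertCols_eq_aux l.length l le_rfl]
  | some m =>
    simp only [insertCols_eq_aux l.length (l.erase m) List.length_erase_le]

lemma insertCols_concat_none {l : List ℕ} {x : ℕ}
    (h : (l.filter (fun y => decide (x < y))).max? = none) :
    insertCols (l ++ [x]) = [x] :: insertCols l := by
  rw [insertCols_concat, h]

lemma insertCols_concat_some {l : List ℕ} {x m : ℕ}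
    (h : (l.filter (fun y => decide (x < y))).max? = some m) :
    insertCols (l ++ [x]) = [m, x] :: insertCols (l.erase m) := by
  rw [insertCols_concat, h]

lemma insertCols_perm (w : List ℕ) : (insertCols w).flatten.Perm w := by
  suffices h : ∀ f (w : List ℕ), w.length ≤ f → (insertCols w).flatten.Perm w from
    h w.length w le_rfl
  intro f
  induction f with
  | zero =>
    intro w hf
    rw [List.length_eq_zero_iff.mp (Nat.le_zero.mp hf)]
    exact List.Perm.refl _
  | succ f ih =>
    intro w hf
    rcases eq_or_ne w [] with rfl | hw
    · exact List.Perm.refl _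
    obtain ⟨l, x, rfl⟩ := exists_concat_of_ne_nil hw
    have hlf : l.length ≤ f := by
      have : (l ++ [x]).length = l.length + 1 := by simp
      omega
    cases h : (l.filter (fun y => decide (x < y))).max? with
    | none =>
      rw [insertCols_concat_none h]
      simp only [List.flatten_cons, List.singleton_append]
      exact ((ih l hlf).cons x).trans (List.perm_append_singleton x l).symm
    | some m =>
      have hm : m ∈ l := by
        have := List.max?_mem h
        exact (List.mem_filter.mp this).1
      rw [insertCols_concat_some h]
      simp only [List.flatten_cons, List.cons_append, List.singleton_append]
      have p1 : (m :: x :: (insertCols (l.erase m)).flatten).Perm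
          (m :: x :: l.erase m) :=
        ((ih (l.erase m) (le_trans List.length_erase_le hlf)).cons x).cons m
      have p2 : (m :: x :: l.erase m).Perm (x :: m :: l.erase m) :=
        List.Perm.swap _ _ _
      have p3 : (x :: m :: l.erase m).Perm (x :: l) :=
        ((List.perm_cons_erase hm).symm).cons x
      exact ((p1.trans p2).trans p3).trans (List.perm_append_singleton x l).symm

lemma minWord_nil : minWord [] = [] := rfl

lemma minWord_cons (c : List ℕ) (t : List (List ℕ)) :
    minWord (c :: t) = minWord t ++ c := by
  simp [minWord]

lemma minWord_perm_flatten (t : List (List ℕ)) : (minWord t).Perm t.flatten :=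
  (List.reverse_perm t).flatten

lemma max?_filter_eq_some {l : List ℕ} {x m : ℕ}
    (h : (l.filter (fun y => decide (x < y))).max? = some m) :
    m ∈ l ∧ x < m ∧ ∀ y ∈ l, x < y → y ≤ m := by
  have : Std.Antisymm (α := ℕ) (· ≤ ·) := ⟨fun _ _ => _root_.le_antisymm⟩
  rw [List.max?_eq_some_iff] at h
  obtain ⟨hmem, hle⟩ := h
  refine ⟨(List.mem_filter.mp hmem).1, by simpa using (List.mem_filter.mp hmem).2, ?_⟩
  intro y hy hxy
  exact hle y (List.mem_filter.mpr ⟨hy, by simpa using hxy⟩)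

lemma lex_append {a b : List ℕ} (h : List.Lex (· < ·) a b) (hl : a.length = b.length)
    (s s' : List ℕ) : List.Lex (· < ·) (a ++ s) (b ++ s') := by
  induction h generalizing s s' with
  | nil => simp at hl
  | @cons x l₁ l₂ h ih => exact List.Lex.cons (ih (by simpa using hl) s s')
  | @rel x l₁ y l₂ hxy => exact List.Lex.rel hxy

lemma lex_mid (p : List ℕ) {x y : ℕ} (s t : List ℕ) (h : x < y) :
    List.Lex (· < ·) (p ++ x :: s) (p ++ y :: t) := by
  induction p with
  | nil => exact List.Lex.rel h
  | cons a p ih => exact List.Lex.cons ih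

lemma concat_max {w' : List ℕ} {m : ℕ} (hm : m ∈ w') (hnd : w'.Nodup)
    (hmax : ∀ y ∈ w'.erase m, y < m) :
    w'.erase m ++ [m] = w' ∨ List.Lex (· < ·) (w'.erase m ++ [m]) w' := by
  obtain ⟨p, q, rfl⟩ := List.append_of_mem hm
  have hmp : m ∉ p := fun hp =>
    (List.disjoint_of_nodup_append hnd) hp (List.mem_cons_self)
  have he : (p ++ m :: q).erase m = p ++ q := by
    rw [List.erase_append_right _ hmp, List.erase_cons_head]
  rw [he]
  rcases q with _ | ⟨y, q⟩
  · left; simp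
  · right
    have hy : y < m := hmax y (by rw [he]; simp)
    have h2 : p ++ y :: q ++ [m] = p ++ y :: (q ++ [m]) := by simp
    rw [h2]
    exact lex_mid p _ _ hy

lemma lex_min_insertCols (w : List ℕ) (hnd : w.Nodup) :
    minWord (insertCols w) = w ∨ List.Lex (· < ·) (minWord (insertCols w)) w := by
  suffices h : ∀ f (w : List ℕ), w.length ≤ f → w.Nodup →
      minWord (insertCols w) = w ∨ List.Lex (· < ·) (minWord (insertCols w)) w from
    h w.length w le_rfl hnd
  clear hnd w
  intro f
  induction f with
  | zero =>
    intro w hf _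
    rw [List.length_eq_zero_iff.mp (Nat.le_zero.mp hf)]
    left; rfl
  | succ f ih =>
    intro w hf hnd
    rcases eq_or_ne w [] with rfl | hw
    · left; rfl
    obtain ⟨l, x, rfl⟩ := exists_concat_of_ne_nil hw
    have hlf : l.length ≤ f := by
      have : (l ++ [x]).length = l.length + 1 := by simp
      omega
    have hndl : l.Nodup := (List.sublist_append_left l [x]).nodup hnd
    cases h : (l.filter (fun y => decide (x < y))).max? with
    | none =>
      rw [insertCols_concat_none h, minWord_cons]
      have hVp : (minWord (insertCols l)).Perm l :=
        (minWord_perm_flatten _).trans (insertCols_perm l)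
      rcases ih l hlf hndl with hv | hv
      · left; rw [hv]
      · right; exact lex_append hv hVp.length_eq [x] [x]
    | some m =>
      obtain ⟨hml, hxm, hub⟩ := max?_filter_eq_some h
      have hmax : ∀ y ∈ l.erase m, y < m := by
        intro y hy
        have hyl : y ∈ l := List.mem_of_mem_erase hy
        have hym : y ≠ m := ((List.Nodup.mem_erase_iff hndl).mp hy).1
        rcases lt_or_ge x y with hxy | hyx
        · exact lt_of_le_of_ne (hub y hyl hxy) hym
        · exact lt_of_le_of_lt hyx hxm
      have hndu : (l.erase m).Nodup := hndl.erase m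
      have hlu : (l.erase m).length ≤ f := le_trans List.length_erase_le hlf
      have hVp : (minWord (insertCols (l.erase m))).Perm (l.erase m) :=
        (minWord_perm_flatten _).trans (insertCols_perm _)
      have hcm := concat_max hml hndl hmax
      have key : minWord (insertCols (l.erase m)) ++ [m] = l ∨
          List.Lex (· < ·) (minWord (insertCols (l.erase m)) ++ [m]) l := by
        rcases ih (l.erase m) hlu hndu with hv | hv
        · rw [hv]; exact hcm
        · right
          have h1 : List.Lex (· < ·) (minWord (insertCols (l.erase m)) ++ [m])
              (l.erase m ++ [m]) := lex_append hv hVp.length_eq [m] [m]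
          rcases hcm with he | hlex
          · rwa [he] at h1
          · exact List.lex_trans (fun h1 h2 => lt_trans h1 h2) h1 hlex
      have hlen : (minWord (insertCols (l.erase m)) ++ [m]).length = l.length := by
        have h1 : l.length = (l.erase m).length + 1 :=
          (List.perm_cons_erase hml).length_eq
        simp [hVp.length_eq, h1]
      rw [insertCols_concat_some h, minWord_cons]
      have hassoc : minWord (insertCols (l.erase m)) ++ [m, x] =
          (minWord (insertCols (l.erase m)) ++ [m]) ++ [x] := by simp
      rcases key with he | hlex
      · left; rw [hassoc, he]
      · right; rw [hassoc]; exact lex_append hlex hlen [x] [x]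

/-- Renamed YFT conditions without the `range'` normalisation. -/
def GoodT (t : List (List ℕ)) : Prop :=
  (∀ c ∈ t, c.length = 1 ∨ c.length = 2) ∧
  (∀ c ∈ t, List.Chain' (fun a b => b < a) c) ∧
  (∀ i j : ℕ, i < j → j < t.length →
    ∀ a ∈ (t.getD i []).head?, ∀ x ∈ t.getD j [], x < a) ∧
  t.flatten.Nodup

lemma goodT_tail {c : List ℕ} {t' : List (List ℕ)} (h : GoodT (c :: t')) : GoodT t' := by
  obtain ⟨h1, h2, h3, h4⟩ := h
  refine ⟨fun d hd => h1 d (List.mem_cons_of_mem _ hd),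
    fun d hd => h2 d (List.mem_cons_of_mem _ hd), ?_, ?_⟩
  · intro i j hij hj a ha x hx
    exact h3 (i+1) (j+1) (by omega) (by simpa using Nat.succ_lt_succ hj) a
      (by simpa using ha) x (by simpa using hx)
  · rw [List.flatten_cons, List.nodup_append] at h4
    exact h4.2.1

lemma head_gt {c : List ℕ} {t' : List (List ℕ)} (h : GoodT (c :: t')) {a : ℕ}
    (ha : a ∈ c.head?) : ∀ y ∈ t'.flatten, y < a := by
  intro y hy
  obtain ⟨d, hd, hyd⟩ := List.mem_flatten.mp hy
  obtain ⟨j, hj, rfl⟩ := List.mem_iff_getElem.mp hd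
  refine h.2.2.1 0 (j+1) (Nat.succ_pos j) (by simpa using Nat.succ_lt_succ hj) a ?_ y ?_
  · simpa using ha
  · rw [List.getD_cons_succ, List.getD_eq_getElem _ _ hj]
    exact hyd

lemma insertCols_minWord (t : List (List ℕ)) (h : GoodT t) :
    insertCols (minWord t) = t := by
  induction t with
  | nil => rfl
  | cons c t' ih =>
    have hgt := goodT_tail h
    have hic := ih hgt
    have hmemlt : ∀ y ∈ minWord t', y ∈ t'.flatten :=
      fun y hy => (minWord_perm_flatten t').subset hy
    rcases h.1 c (List.mem_cons_self) with h1 | h2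
    · obtain ⟨a, rfl⟩ : ∃ a, c = [a] := by
        rcases c with _ | ⟨a, _ | ⟨b, c⟩⟩ <;> simp_all
      have htop : ∀ y ∈ minWord t', y < a :=
        fun y hy => head_gt h rfl y (hmemlt y hy)
      have hfil : (minWord t').filter (fun y => decide (a < y)) = [] := by
        rw [List.filter_eq_nil_iff]
        intro y hy
        simpa using not_lt.mpr (le_of_lt (htop y hy))
      have hfil2 : ((minWord t').filter (fun y => decide (a < y))).max? = none := by
        rw [hfil]; rfl
      rw [minWord_cons, insertCols_concat_none hfil2, hic]
    · obtain ⟨b, a, rfl⟩ : ∃ b a, c = [b, a] := by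
        rcases c with _ | ⟨b, _ | ⟨a, _ | ⟨e, c⟩⟩⟩ <;> simp_all
      have hab : a < b := by
        have := h.2.1 [b, a] (List.mem_cons_self)
        simpa [List.Chain', List.isChain_cons_cons] using this
      have htop : ∀ y ∈ t'.flatten, y < b := head_gt h rfl
      have hbnot : b ∉ t'.flatten := by
        have h4 := h.2.2.2
        rw [List.flatten_cons] at h4
        simp only [List.cons_append, List.nodup_cons] at h4
        intro hb
        exact h4.1 (by simp [hb])
      have hbnotm : b ∉ minWord t' := fun hb => hbnot (hmemlt b hb)
      have hsplit : minWord t' ++ [b, a] = (minWord t' ++ [b]) ++ [a] := by simp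
      rw [minWord_cons, hsplit]
      have hfil : ((minWord t' ++ [b]).filter (fun y => decide (a < y))).max? = some b := by
        have : Std.Antisymm (α := ℕ) (· ≤ ·) := ⟨fun _ _ => _root_.le_antisymm⟩
        rw [List.max?_eq_some_iff]
        constructor
        · exact List.mem_filter.mpr ⟨by simp, by simpa using hab⟩
        · intro y hy
          have hyl := (List.mem_filter.mp hy).1
          rcases List.mem_append.mp hyl with hy' | hy'
          · exact le_of_lt (htop y (hmemlt y hy'))
          · simp at hy'; omega
      have herase : (minWord t' ++ [b]).erase b = minWord t' := by
        rw [List.erase_append_right _ hbnotm, List.erase_cons_head, List.append_nil]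
      rw [insertCols_concat_some hfil, herase, hic]

end YFAux

/-- `min(t)` (columns right to left, each top to bottom) is a
permutation of `{1,…,n}`, its insertion tableau is `t`, and it is
lexicographically least among the permutations inserting to `t`. -/
theorem minWord_is_lex_least_in_class (n : ℕ) (t : List (List ℕ))
    (ht : IsYFT n t) :
    (minWord t).Perm (List.range' 1 n) ∧
    insertCols (minWord t) = t ∧
    ∀ w : List ℕ, w.Perm (List.range' 1 n) → insertCols w = t →
      w = minWord t ∨ List.Lex (· < ·) (minWord t) w := by
  have hnodup : t.flatten.Nodup := (ht.2.2.2.nodup_iff).mpr (List.nodup_range')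
  have hgood : GoodT t := ⟨ht.1, ht.2.1, ht.2.2.1, hnodup⟩
  refine ⟨(minWord_perm_flatten t).trans ht.2.2.2, insertCols_minWord t hgood, ?_⟩
  intro w hwp hwi
  have hnd : w.Nodup := (hwp.nodup_iff).mpr (List.nodup_range')
  have := lex_min_insertCols w hnd
  rw [hwi] at this
  rcases this with h | h
  · exact Or.inl h.symm
  · exact Or.inr h
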